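/- Let E be a real Hilbert space and let f, g : E → ℝ be differentiable, with ∇f L_f-Lipschitz and ∇g L_g-Lipschitz for constants L_f, L_g ≥ 0. If g(x) ≥ f(x) for every x ∈ E, then for every x ∈ E: ‖∇g(x) − ∇f(x)‖² ≤ 2(L_f + L_g)·(g(x) − f(x)). -/

import Mathlib

open RealInnerProductSpace

section Aux

variable {E : Type*} [NormedAddCommGroup E] [InnerProductSpace ℝ E] [CompleteSpace E]

/-- Descent lemma: quadratic upper bound for functions with Lipschitz gradient. -/
lemma descent_lemma (h : E → ℝ) (G : E → E) (hG : ∀ x, HasGradientAt h (G x) x)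
    (L : ℝ) (hL : 0 ≤ L) (hLip : ∀ x y : E, ‖G x - G y‖ ≤ L * ‖x - y‖) (x y : E) :
    h y ≤ h x + ⟪G x, y - x⟫ + L / 2 * ‖y - x‖ ^ 2 := by
  set v := y - x with hv
  set φ : ℝ → ℝ := fun t => h (x + t • v) - t * ⟪G x, v⟫ - L / 2 * t ^ 2 * ‖v‖ ^ 2 with hφ
  have hc : ∀ t : ℝ, HasDerivAt (fun t : ℝ => x + t • v) v t := fun t => by
    simpa using ((hasDerivAt_id t).smul_const v).const_add x
  have hφ' : ∀ t : ℝ, HasDerivAt φ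
      (⟪G (x + t • v), v⟫ - ⟪G x, v⟫ - L * t * ‖v‖ ^ 2) t := by
    intro t
    have h1 : HasDerivAt (fun t : ℝ => h (x + t • v)) (⟪G (x + t • v), v⟫) t := by
      have hfd : HasFDerivAt h ((InnerProductSpace.toDual ℝ E) (G (x + t • v)))
          (x + t • v) := hG (x + t • v)
      have := hfd.comp_hasDerivAt t (hc t)
      simpa [InnerProductSpace.toDual_apply_apply, Function.comp_def] using this
    have h2 : HasDerivAt (fun t : ℝ => t * ⟪G x, v⟫) (⟪G x, v⟫) t := by
      simpa using (hasDerivAt_id t).mul_const (⟪G x, v⟫)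
    have h3 : HasDerivAt (fun t : ℝ => L / 2 * t ^ 2 * ‖v‖ ^ 2)
        (L * t * ‖v‖ ^ 2) t := by
      have := ((hasDerivAt_pow 2 t).const_mul (L / 2)).mul_const (‖v‖ ^ 2)
      refine this.congr_deriv ?_
      push_cast
      ring
    simpa [hφ, Pi.sub_def] using (h1.sub h2).sub h3
  have key : φ 1 ≤ φ 0 := by
    have hanti : AntitoneOn φ (Set.Icc (0 : ℝ) 1) := by
      apply antitoneOn_of_deriv_nonpos (convex_Icc 0 1)
      · exact fun t _ => (hφ' t).continuousAt.continuousWithinAt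
      · exact fun t _ => ((hφ' t).differentiableAt).differentiableWithinAt
      · intro t ht
        rw [interior_Icc] at ht
        rw [(hφ' t).deriv]
        have hbound : ⟪G (x + t • v) - G x, v⟫ ≤ L * t * ‖v‖ ^ 2 := by
          calc ⟪G (x + t • v) - G x, v⟫ ≤ ‖G (x + t • v) - G x‖ * ‖v‖ :=
                real_inner_le_norm _ _
            _ ≤ (L * ‖(x + t • v) - x‖) * ‖v‖ := by
                have := hLip (x + t • v) x
                nlinarith [norm_nonneg v]
            _ = L * t * ‖v‖ ^ 2 := by
                rw [add_sub_cancel_left, norm_smul, Real.norm_eq_abs,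
                  abs_of_pos ht.1]
                ring
        have : ⟪G (x + t • v), v⟫ - ⟪G x, v⟫ = ⟪G (x + t • v) - G x, v⟫ := by
          rw [inner_sub_left]
        linarith
    exact hanti (Set.left_mem_Icc.mpr zero_le_one) (Set.right_mem_Icc.mpr zero_le_one)
      zero_le_one
  have e1 : x + (1 : ℝ) • v = y := by simp [hv]
  simp only [hφ, e1, one_pow, one_mul, zero_smul, add_zero, zero_mul, zero_pow,
    mul_zero, sub_zero] at key
  linarith

end Aux

/-- bound on the gradient of the majorization gap.  If `f, g : E → ℝ`
are differentiable on a real Hilbert space with `L_f`- resp. `L_g`-Lipschitz gradients and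
`g ≥ f` everywhere, then `‖∇g(x) - ∇f(x)‖² ≤ 2(L_f + L_g)(g(x) - f(x))` for every `x`. -/
theorem sq_norm_grad_gap_le {E : Type*} [NormedAddCommGroup E]
    [InnerProductSpace ℝ E] [CompleteSpace E]
    (f g : E → ℝ) (Lf Lg : ℝ) (hLf : 0 ≤ Lf) (hLg : 0 ≤ Lg)
    (hf : Differentiable ℝ f) (hg : Differentiable ℝ g)
    (hfLip : ∀ x y : E, ‖gradient f x - gradient f y‖ ≤ Lf * ‖x - y‖)
    (hgLip : ∀ x y : E, ‖gradient g x - gradient g y‖ ≤ Lg * ‖x - y‖)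
    (hge : ∀ x : E, f x ≤ g x) :
    ∀ x : E, ‖gradient g x - gradient f x‖ ^ 2 ≤ 2 * (Lf + Lg) * (g x - f x) := by
  intro x
  set h : E → ℝ := fun y => g y - f y with hh
  set G : E → E := fun y => gradient g y - gradient f y with hG
  have hGrad : ∀ y, HasGradientAt h (G y) y := by
    intro y
    have h1 := (hg y).hasGradientAt
    have h2 := (hf y).hasGradientAt
    unfold HasGradientAt HasGradientAtFilter at h1 h2 ⊢
    have := h1.sub h2
    simpa [hG, hh, map_sub, Pi.sub_def] using this
  set L : ℝ := Lf + Lg with hL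
  have hLnn : 0 ≤ L := add_nonneg hLf hLg
  have hLip : ∀ a b : E, ‖G a - G b‖ ≤ L * ‖a - b‖ := by
    intro a b
    have : G a - G b = (gradient g a - gradient g b) - (gradient f a - gradient f b) := by
      simp [hG]; abel
    rw [this]
    calc ‖(gradient g a - gradient g b) - (gradient f a - gradient f b)‖
        ≤ ‖gradient g a - gradient g b‖ + ‖gradient f a - gradient f b‖ := norm_sub_le _ _
      _ ≤ Lg * ‖a - b‖ + Lf * ‖a - b‖ := add_le_add (hgLip a b) (hfLip a b)
      _ = L * ‖a - b‖ := by ring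
  have hpos : ∀ y, 0 ≤ h y := fun y => sub_nonneg.mpr (hge y)
  suffices hsuf : ‖G x‖ ^ 2 ≤ 2 * L * h x by
    simpa [hG, hL, hh, mul_comm] using hsuf
  clear_value h G L
  -- key inequality: for all t ≥ 0, t * ‖G x‖² - L/2 * t² * ‖G x‖² ≤ h x
  have key : ∀ t : ℝ, 0 ≤ t → t * ‖G x‖ ^ 2 - L / 2 * t ^ 2 * ‖G x‖ ^ 2 ≤ h x := by
    intro t ht
    have := descent_lemma h G hGrad L hLnn hLip x (x - t • G x)
    have e1 : x - t • G x - x = -(t • G x) := by abel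
    rw [e1] at this
    have e2 : ⟪G x, -(t • G x)⟫ = -(t * ‖G x‖ ^ 2) := by
      rw [inner_neg_right, real_inner_smul_right, real_inner_self_eq_norm_sq]
    have e3 : ‖-(t • G x)‖ ^ 2 = t ^ 2 * ‖G x‖ ^ 2 := by
      rw [norm_neg, norm_smul, Real.norm_eq_abs, mul_pow, sq_abs]
    rw [e2, e3] at this
    have h0 := hpos (x - t • G x)
    nlinarith [this, h0]
  rcases eq_or_lt_of_le hLnn with hL0 | hL0
  · -- L = 0 case: ‖G x‖ must be 0
    have hGx : ‖G x‖ = 0 := by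
      by_contra hne
      have hpos' : 0 < ‖G x‖ ^ 2 := by positivity
      have hk := key ((h x + 1) / ‖G x‖ ^ 2)
        (div_nonneg (by linarith [hpos x]) hpos'.le)
      rw [← hL0, div_mul_cancel₀ _ (ne_of_gt hpos')] at hk
      nlinarith [hk]
    rw [hGx]
    have := hpos x
    nlinarith
  · -- L > 0: take t = 1/L
    have hk := key (1 / L) (by positivity)
    have hL' : L ≠ 0 := ne_of_gt hL0
    have e : (1 / L) * ‖G x‖ ^ 2 - L / 2 * (1 / L) ^ 2 * ‖G x‖ ^ 2
        = ‖G x‖ ^ 2 / (2 * L) := by field_simp; ring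
    rw [e, div_le_iff₀ (by positivity)] at hk
    linarith [hk]
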